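/- arXiv:2605.09261 — 5 statements merged into one kernel-verified Lean document; each statement's English description precedes it below -/
import Mathlib

section
/- For a partition λ of n with ℓ parts, the Schur polynomial s_λ equals the determinant of the ℓ×ℓ matrix whose (i,j) entry is the complete homogeneous symmetric polynomial h_{λ_i - i + j}, with the convention h_k = 0 for k < 0 and h_0 = 1. -/
/-!
STATEMENT 0 (Jacobi–Trudi): for a partition λ of n with ℓ parts, the Schur
polynomial s_λ equals det (h_{λ_i − i + j}), with h_k = 0 for k < 0.

We work with ℓ variables.  The Schur polynomial is defined via the bialternant
formula s_λ = a_{λ+δ} / a_δ, where a_μ = det (x_j^{μ_i}) and δ = (ℓ−1, …, 1, 0)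
and a_δ is the Vandermonde determinant.  Since the polynomial ring is a domain
and a_δ is a nonzero divisor, the identity s_λ = det(h_{λ_i−i+j}) is stated in
its equivalent product form  a_{λ+δ} = det (h_{λ_i − i + j}) · a_δ.
-/

open MvPolynomial

/-- Complete homogeneous symmetric polynomial indexed by an integer, with the
convention `h k = 0` for `k < 0` (and `h 0 = 1`). -/
noncomputable def hInt (ℓ : ℕ) (k : ℤ) : MvPolynomial (Fin ℓ) ℤ :=
  if 0 ≤ k then MvPolynomial.hsymm (Fin ℓ) ℤ k.toNat else 0

namespace JacobiTrudiAux

open Finset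

variable {ℓ : ℕ}

/-- geometric series `∑ (X i)^n tⁿ`. -/
noncomputable def geom (i : Fin ℓ) : PowerSeries (MvPolynomial (Fin ℓ) ℤ) :=
  PowerSeries.mk fun n => X i ^ n

/-- `1 - X i · t`. -/
noncomputable def onemx (i : Fin ℓ) : PowerSeries (MvPolynomial (Fin ℓ) ℤ) :=
  1 - PowerSeries.C (X i) * PowerSeries.X

lemma onemx_mul_geom (i : Fin ℓ) : onemx i * geom i = 1 := by
  have : onemx i * geom i = geom i - PowerSeries.C (X i) * (PowerSeries.X * geom i) := by
    rw [onemx]; ring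
  rw [this]
  ext n
  cases n with
  | zero =>
      simp [geom, PowerSeries.coeff_zero_eq_constantCoeff]
  | succ n =>
      simp [geom, PowerSeries.coeff_succ_X_mul, PowerSeries.coeff_C_mul, pow_succ,
        PowerSeries.coeff_one, PowerSeries.coeff_mk, mul_comm]

lemma H_mul_prod : (∏ i : Fin ℓ, geom i) * ∏ i : Fin ℓ, onemx i = 1 := by
  rw [← Finset.prod_mul_distrib]
  rw [Finset.prod_congr rfl fun i _ => (mul_comm (geom i) (onemx i)).trans (onemx_mul_geom i)]
  simp

noncomputable def Eprod (j : Fin ℓ) : PowerSeries (MvPolynomial (Fin ℓ) ℤ) :=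
  ∏ i ∈ Finset.univ.erase j, onemx i

lemma H_mul_Eprod (j : Fin ℓ) : (∏ i : Fin ℓ, geom i) * Eprod j = geom j := by
  have h1 : onemx j * Eprod j = ∏ i : Fin ℓ, onemx i :=
    Finset.mul_prod_erase _ _ (Finset.mem_univ j)
  calc (∏ i : Fin ℓ, geom i) * Eprod j
      = (onemx j * geom j) * ((∏ i : Fin ℓ, geom i) * Eprod j) := by
        rw [onemx_mul_geom, one_mul]
    _ = geom j * ((∏ i : Fin ℓ, geom i) * (onemx j * Eprod j)) := by ring
    _ = geom j := by rw [h1, H_mul_prod, mul_one]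

lemma coeff_H (n : ℕ) :
    PowerSeries.coeff n (∏ i : Fin ℓ, geom i) = hsymm (Fin ℓ) ℤ n := by
  classical
  rw [PowerSeries.coeff_prod]
  simp only [geom, PowerSeries.coeff_mk]
  rw [hsymm]
  symm
  refine Finset.sum_bij (i := fun (s : Sym (Fin ℓ) n) _ => Multiset.toFinsupp s.1)
    ?_ ?_ ?_ ?_
  · intro s _
    rw [Finset.mem_finsuppAntidiag]
    refine ⟨?_, Finset.subset_univ _⟩
    have h1 : (Multiset.toFinsupp s.1).sum (fun _ => id) = n := by
      rw [Multiset.toFinsupp_sum_eq]; exact s.2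
    rw [Finsupp.sum_fintype _ _ (fun _ => rfl)] at h1
    exact h1
  · intro s1 _ s2 _ h
    have := congrArg Finsupp.toMultiset h
    simpa [Sym.ext_iff, Multiset.ext] using this
  · intro l hl
    rw [Finset.mem_finsuppAntidiag] at hl
    have hcard : Multiset.card (Finsupp.toMultiset l) = n := by
      rw [Finsupp.card_toMultiset, Finsupp.sum_fintype _ _ (fun _ => rfl)]
      exact hl.1
    exact ⟨⟨Finsupp.toMultiset l, hcard⟩, Finset.mem_univ _, by simp⟩
  · intro s _
    simp only [Multiset.toFinsupp_apply]
    rw [Finset.prod_multiset_map_count]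
    refine Finset.prod_subset (Finset.subset_univ _) ?_
    intro i _ hi
    rw [Multiset.mem_toFinset, ← Multiset.count_eq_zero] at hi
    rw [hi, pow_zero]

lemma coeff_onemx_prod_eq_zero {s : Finset (Fin ℓ)} {m : ℕ} (h : s.card < m) :
    PowerSeries.coeff m (∏ i ∈ s, onemx i) = 0 := by
  classical
  rw [PowerSeries.coeff_prod]
  refine Finset.sum_eq_zero fun l hl => ?_
  rw [Finset.mem_finsuppAntidiag] at hl
  have hex : ∃ i ∈ s, 2 ≤ l i := by
    by_contra hc
    push_neg at hc
    have hsum : ∑ i ∈ s, l i = m := hl.1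
    have h1 : ∑ i ∈ s, l i ≤ ∑ i ∈ s, 1 := Finset.sum_le_sum fun i hi => by
      have := hc i hi; omega
    rw [Finset.sum_const, smul_eq_mul, mul_one] at h1
    omega
  obtain ⟨i, hi, h2⟩ := hex
  refine Finset.prod_eq_zero hi ?_
  rw [onemx, map_sub, PowerSeries.coeff_one, PowerSeries.coeff_C_mul, PowerSeries.coeff_X]
  rw [if_neg (by omega), if_neg (by omega), mul_zero, sub_zero]

lemma coeff_Eprod_eq_zero (j : Fin ℓ) {m : ℕ} (h : ℓ ≤ m) :
    PowerSeries.coeff m (Eprod j) = 0 := by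
  refine coeff_onemx_prod_eq_zero ?_
  rw [Finset.card_erase_of_mem (Finset.mem_univ j), Finset.card_univ, Fintype.card_fin]
  have : 0 < ℓ := j.pos
  omega

lemma key (j : Fin ℓ) (α : ℕ) :
    ∑ k : Fin ℓ, hInt ℓ ((α : ℤ) - ((ℓ - 1 - (k : ℕ) : ℕ) : ℤ)) *
        PowerSeries.coeff (ℓ - 1 - (k : ℕ)) (Eprod j) = X j ^ α := by
  classical
  have h0 : (X j : MvPolynomial (Fin ℓ) ℤ) ^ α
      = PowerSeries.coeff α ((∏ i : Fin ℓ, geom i) * Eprod j) := by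
    rw [H_mul_Eprod, geom, PowerSeries.coeff_mk]
  rw [h0, PowerSeries.coeff_mul]
  -- reindex the antidiagonal sum over range (α+1), indexed by the Eprod degree
  rw [← Finset.Nat.sum_antidiagonal_swap]
  simp only [Prod.fst_swap, Prod.snd_swap]
  rw [Finset.Nat.sum_antidiagonal_eq_sum_range_succ
    (f := fun q p => PowerSeries.coeff p (∏ i : Fin ℓ, geom i)
      * PowerSeries.coeff q (Eprod j)) α]
  simp only [coeff_H]
  -- turn the LHS into a sum over range ℓ
  have hrev : ∀ k : Fin ℓ, ℓ - 1 - (k : ℕ) = ((Fin.rev k : Fin ℓ) : ℕ) := by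
    intro k
    rw [Fin.val_rev]
    omega
  have lhs1 : ∑ k : Fin ℓ, hInt ℓ ((α : ℤ) - ((ℓ - 1 - (k : ℕ) : ℕ) : ℤ)) *
        PowerSeries.coeff (ℓ - 1 - (k : ℕ)) (Eprod j)
      = ∑ m ∈ Finset.range ℓ, hInt ℓ ((α : ℤ) - (m : ℤ)) *
        PowerSeries.coeff m (Eprod j) := by
    rw [← Fin.sum_univ_eq_sum_range]
    refine Fintype.sum_equiv Fin.revPerm _ _ fun k => ?_
    simp only [Fin.revPerm_apply]
    rw [hrev k]
  rw [lhs1]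
  -- both sides equal the sum over range (max ℓ (α+1))
  set N := max ℓ (α + 1) with hN
  have e1 : ∑ m ∈ Finset.range ℓ, hInt ℓ ((α : ℤ) - (m : ℤ)) *
        PowerSeries.coeff m (Eprod j)
      = ∑ m ∈ Finset.range N, hInt ℓ ((α : ℤ) - (m : ℤ)) *
        PowerSeries.coeff m (Eprod j) := by
    refine Finset.sum_subset (Finset.range_subset_range.2 (le_max_left _ _)) ?_
    intro m _ hm
    rw [Finset.mem_range, not_lt] at hm
    rw [coeff_Eprod_eq_zero j hm, mul_zero]
  have e2 : ∑ m ∈ Finset.range (α + 1), hInt ℓ ((α : ℤ) - (m : ℤ)) *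
        PowerSeries.coeff m (Eprod j)
      = ∑ m ∈ Finset.range N, hInt ℓ ((α : ℤ) - (m : ℤ)) *
        PowerSeries.coeff m (Eprod j) := by
    refine Finset.sum_subset (Finset.range_subset_range.2 (le_max_right _ _)) ?_
    intro m _ hm
    rw [Finset.mem_range, not_lt] at hm
    rw [hInt, if_neg (by omega), zero_mul]
  rw [e1, ← e2]
  refine Finset.sum_congr rfl fun m hm => ?_
  rw [Finset.mem_range] at hm
  congr 1
  rw [hInt, if_pos (by omega)]
  congr 1
  omega

end JacobiTrudiAux

theorem jacobi_trudi {ℓ : ℕ} (lam : Fin ℓ → ℕ) (hanti : Antitone lam) :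
    Matrix.det (Matrix.of fun i j : Fin ℓ =>
        (X j : MvPolynomial (Fin ℓ) ℤ) ^ (lam i + (ℓ - 1 - (i : ℕ)))) =
      Matrix.det (Matrix.of fun i j : Fin ℓ =>
        hInt ℓ ((lam i : ℤ) - (i : ℕ) + (j : ℕ))) *
      Matrix.det (Matrix.of fun i j : Fin ℓ =>
        (X j : MvPolynomial (Fin ℓ) ℤ) ^ (ℓ - 1 - (i : ℕ))) := by
  classical
  set Emat : Matrix (Fin ℓ) (Fin ℓ) (MvPolynomial (Fin ℓ) ℤ) :=
    Matrix.of fun k j => PowerSeries.coeff (ℓ - 1 - (k : ℕ)) (JacobiTrudiAux.Eprod j)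
    with hEmat
  set Hmat : Matrix (Fin ℓ) (Fin ℓ) (MvPolynomial (Fin ℓ) ℤ) :=
    Matrix.of fun i k => hInt ℓ ((lam i : ℤ) - (i : ℕ) + (k : ℕ)) with hHmat
  set H0 : Matrix (Fin ℓ) (Fin ℓ) (MvPolynomial (Fin ℓ) ℤ) :=
    Matrix.of fun i k => hInt ℓ ((k : ℕ) - (i : ℕ) : ℤ) with hH0
  have hM : (Matrix.of fun i j : Fin ℓ =>
      (X j : MvPolynomial (Fin ℓ) ℤ) ^ (lam i + (ℓ - 1 - (i : ℕ)))) = Hmat * Emat := by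
    refine Matrix.ext fun i j => ?_
    rw [Matrix.mul_apply]
    simp only [hHmat, hEmat, Matrix.of_apply]
    refine ((Finset.sum_congr rfl fun k _ => ?_).trans
      (JacobiTrudiAux.key j (lam i + (ℓ - 1 - (i : ℕ))))).symm
    congr 2
    have hi := i.isLt
    have hk := k.isLt
    omega
  have hV : (Matrix.of fun i j : Fin ℓ =>
      (X j : MvPolynomial (Fin ℓ) ℤ) ^ (ℓ - 1 - (i : ℕ))) = H0 * Emat := by
    refine Matrix.ext fun i j => ?_
    rw [Matrix.mul_apply]
    simp only [hH0, hEmat, Matrix.of_apply]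
    refine ((Finset.sum_congr rfl fun k _ => ?_).trans
      (JacobiTrudiAux.key j (ℓ - 1 - (i : ℕ)))).symm
    congr 2
    have hi := i.isLt
    have hk := k.isLt
    omega
  have hH0det : H0.det = 1 := by
    have htri : H0.BlockTriangular id := by
      intro i j hij
      have hji : (j : ℕ) < (i : ℕ) := hij
      simp only [hH0, Matrix.of_apply, hInt]
      rw [if_neg (by omega)]
    rw [Matrix.det_of_upperTriangular htri]
    refine Finset.prod_eq_one fun i _ => ?_
    simp [hH0, hInt, hsymm_zero]
  rw [hM, hV, Matrix.det_mul, Matrix.det_mul, hH0det, one_mul]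
end

section
/- Let λ be a partition with ℓ parts and for a permutation w in the symmetric group S_ℓ define the integer vector μ(w) by μ(w)_i = λ_{w^{-1}(i)} + i - w^{-1}(i). If all entries of μ(w) are nonnegative, then for every u ≤ w in Bruhat order, all entries of μ(u) are also nonnegative. -/
/-!
STATEMENT 1: Let λ be a partition with ℓ parts and for w ∈ S_ℓ define
μ(w)_i = λ_{w⁻¹(i)} + i − w⁻¹(i).  If all entries of μ(w) are nonnegative,
then for every u ≤ w in Bruhat order, all entries of μ(u) are nonnegative.

We define the Bruhat order on `Equiv.Perm (Fin ℓ)` in the standard way: it is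
the reflexive-transitive closure of the relation "multiply by a transposition
(reflection) and strictly increase the length", where the length of a
permutation is its number of inversions.
-/

/-- The number of inversions of a permutation, i.e. its Coxeter length. -/
def invCount {m : ℕ} (w : Equiv.Perm (Fin m)) : ℕ :=
  (Finset.univ.filter fun p : Fin m × Fin m => p.1 < p.2 ∧ w p.2 < w p.1).card

/-- The Bruhat order on the symmetric group `S_m`. -/
def bruhatLE {m : ℕ} (u w : Equiv.Perm (Fin m)) : Prop :=
  Relation.ReflTransGen
    (fun a b => (∃ i j : Fin m, i ≠ j ∧ b = a * Equiv.swap i j) ∧ invCount a < invCount b) u w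

lemma swap_keeps {m : ℕ} (a : Equiv.Perm (Fin m)) (i j : Fin m)
    (hij : i < j) (hv : a i < a j) (p q : Fin m) (hpq : p < q)
    (ha : a q < a p) (hb : ¬ a (Equiv.swap i j q) < a (Equiv.swap i j p)) :
    Equiv.swap i j p < Equiv.swap i j q := by
  by_cases hpi : p = i <;> by_cases hpj : p = j <;> by_cases hqi : q = i <;> by_cases hqj : q = j
  all_goals subst_vars
  all_goals simp_all [Equiv.swap_apply_left, Equiv.swap_apply_right, Equiv.swap_apply_of_ne_of_ne]
  all_goals first
    | exact hij.trans hpq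
    | exact hpq.trans hij
    | exact absurd ((ha.trans hv).trans_le hb) (lt_irrefl _)
    | exact absurd ((hv.trans ha).trans_le hb) (lt_irrefl _)

lemma invCount_lt_swap {m : ℕ} (a : Equiv.Perm (Fin m)) (i j : Fin m)
    (hij : i < j) (hv : a i < a j) :
    invCount a < invCount (a * Equiv.swap i j) := by
  classical
  set s := Equiv.swap i j with hs
  set b := a * s with hbdef
  have hbap : ∀ x, b x = a (s x) := fun x => rfl
  have hss : ∀ x, s (s x) = x := fun x => by rw [hs, Equiv.swap_apply_self]
  set A := Finset.univ.filter fun p : Fin m × Fin m => p.1 < p.2 ∧ a p.2 < a p.1 with hA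
  set B := Finset.univ.filter fun p : Fin m × Fin m => p.1 < p.2 ∧ b p.2 < b p.1 with hB
  have hijB : (i, j) ∈ B := by
    simp only [hB, Finset.mem_filter, Finset.mem_univ, true_and]
    refine ⟨hij, ?_⟩
    rw [hbap, hbap, hs, Equiv.swap_apply_left, Equiv.swap_apply_right]
    exact hv
  have hcard : A.card ≤ (B.erase (i, j)).card := by
    apply Finset.card_le_card_of_injOn
      (fun p => if p.1 < p.2 ∧ b p.2 < b p.1 then p else (s p.1, s p.2))
    · intro p hp
      simp only [Finset.mem_coe]
      simp only [hA, Finset.mem_coe, Finset.mem_filter, Finset.mem_univ, true_and] at hp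
      obtain ⟨hpq, hav⟩ := hp
      by_cases hinv : p.1 < p.2 ∧ b p.2 < b p.1
      · rw [if_pos hinv]
        refine Finset.mem_erase.2 ⟨?_, ?_⟩
        · rintro rfl
          exact absurd hav (not_lt.2 hv.le)
        · simp only [hB, Finset.mem_filter, Finset.mem_univ, true_and]; exact hinv
      · rw [if_neg hinv]
        have hnb : ¬ b p.2 < b p.1 := fun h => hinv ⟨hpq, h⟩
        have hlt : s p.1 < s p.2 :=
          swap_keeps a i j hij hv p.1 p.2 hpq hav (by simpa [hbap] using hnb)
        refine Finset.mem_erase.2 ⟨?_, ?_⟩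
        · intro h
          have h1 : s p.1 = i := congrArg Prod.fst h
          have h2 : s p.2 = j := congrArg Prod.snd h
          have e1 : p.1 = j := by
            have := congrArg s h1
            rwa [hss, hs, Equiv.swap_apply_left] at this
          have e2 : p.2 = i := by
            have := congrArg s h2
            rwa [hss, hs, Equiv.swap_apply_right] at this
          rw [e1, e2] at hpq
          exact lt_asymm hij hpq
        · simp only [hB, Finset.mem_filter, Finset.mem_univ, true_and]
          refine ⟨hlt, ?_⟩
          rw [hbap, hbap, hss, hss]
          exact hav
    · intro x hx y hy heq
      simp only at heq
      simp only [hA, Finset.coe_filter, Set.mem_setOf_eq, Finset.mem_univ, true_and] at hx hy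
      by_cases h1 : x.1 < x.2 ∧ b x.2 < b x.1 <;> by_cases h2 : y.1 < y.2 ∧ b y.2 < b y.1
      · rwa [if_pos h1, if_pos h2] at heq
      · rw [if_pos h1, if_neg h2] at heq
        exfalso
        apply h2
        refine ⟨hy.1, ?_⟩
        have e1 : x.1 = s y.1 := congrArg Prod.fst heq
        have e2 : x.2 = s y.2 := congrArg Prod.snd heq
        have := hx.2
        rw [e1, e2] at this
        rwa [hbap, hbap]
      · rw [if_neg h1, if_pos h2] at heq
        exfalso
        apply h1
        refine ⟨hx.1, ?_⟩
        have e1 : s x.1 = y.1 := congrArg Prod.fst heq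
        have e2 : s x.2 = y.2 := congrArg Prod.snd heq
        have := hy.2
        rw [← e1, ← e2] at this
        rwa [hbap, hbap]
      · rw [if_neg h1, if_neg h2] at heq
        have e1 : s x.1 = s y.1 := congrArg Prod.fst heq
        have e2 : s x.2 = s y.2 := congrArg Prod.snd heq
        exact Prod.ext (s.injective e1) (s.injective e2)
  have hlt : (B.erase (i,j)).card < B.card := Finset.card_erase_lt_of_mem hijB
  have e1 : invCount a = A.card := rfl
  have e2 : invCount b = B.card := rfl
  omega

/-- One step down in the Bruhat order preserves nonnegativity (ordered version). -/
lemma step_down' {ℓ : ℕ} (lam : Fin ℓ → ℕ) (hanti : Antitone lam)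
    (a b : Equiv.Perm (Fin ℓ)) (i j : Fin ℓ) (hij : i < j)
    (hb : b = a * Equiv.swap i j) (hlen : invCount a < invCount b)
    (hmb : ∀ x : Fin ℓ, (0:ℤ) ≤ (lam (b⁻¹ x) : ℤ) + (x:ℕ) - ((b⁻¹ x : Fin ℓ):ℕ)) :
    ∀ x : Fin ℓ, (0:ℤ) ≤ (lam (a⁻¹ x) : ℤ) + (x:ℕ) - ((a⁻¹ x : Fin ℓ):ℕ) := by
  have hbi : b i = a j := by rw [hb]; simp [Equiv.Perm.mul_apply, Equiv.swap_apply_left]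
  have hbj : b j = a i := by rw [hb]; simp [Equiv.Perm.mul_apply, Equiv.swap_apply_right]
  -- First show a i < a j using the length condition.
  have hv : a i < a j := by
    by_contra h
    have hne : a i ≠ a j := fun h' => (hij.ne (a.injective h')).elim
    have h' : a j < a i := lt_of_le_of_ne (not_lt.1 h) (Ne.symm hne)
    have hv' : b i < b j := by rw [hbi, hbj]; exact h'
    have := invCount_lt_swap b i j hij hv'
    have hba : b * Equiv.swap i j = a := by
      rw [hb, mul_assoc, Equiv.swap_mul_self, mul_one]
    rw [hba] at this
    omega
  -- Inverse relation
  have hbinv : ∀ x, b⁻¹ x = Equiv.swap i j (a⁻¹ x) := by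
    intro x
    rw [hb, mul_inv_rev, Equiv.swap_inv, Equiv.Perm.mul_apply]
  intro x
  by_cases hki : a⁻¹ x = i
  · -- x = a i ; b⁻¹ x = j
    have hbx : b⁻¹ x = j := by rw [hbinv, hki, Equiv.swap_apply_left]
    have h1 := hmb x
    rw [hbx] at h1
    have hlam : lam j ≤ lam i := hanti hij.le
    have hij' : (i:ℕ) < (j:ℕ) := hij
    rw [hki]
    omega
  · by_cases hkj : a⁻¹ x = j
    · -- x = a j ; use hmb at a i
      have h1 := hmb (a i)
      have hbai : b⁻¹ (a i) = j := by
        rw [hbinv, (show a⁻¹ (a i) = i from a.symm_apply_apply i), Equiv.swap_apply_left]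
      rw [hbai] at h1
      have hax : a j = x := by rw [← hkj, (show a (a⁻¹ x) = x from a.apply_symm_apply x)]
      have hval : (a i : ℕ) < (x : ℕ) := by rw [← hax]; exact hv
      rw [hkj]
      omega
    · have hbx : b⁻¹ x = a⁻¹ x := by
        rw [hbinv, Equiv.swap_apply_of_ne_of_ne hki hkj]
      have h1 := hmb x
      rw [hbx] at h1
      exact h1

/-- One step down in the Bruhat order preserves nonnegativity. -/
lemma step_down {ℓ : ℕ} (lam : Fin ℓ → ℕ) (hanti : Antitone lam)
    (a b : Equiv.Perm (Fin ℓ)) (i j : Fin ℓ) (hij : i ≠ j)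
    (hb : b = a * Equiv.swap i j) (hlen : invCount a < invCount b)
    (hmb : ∀ x : Fin ℓ, (0:ℤ) ≤ (lam (b⁻¹ x) : ℤ) + (x:ℕ) - ((b⁻¹ x : Fin ℓ):ℕ)) :
    ∀ x : Fin ℓ, (0:ℤ) ≤ (lam (a⁻¹ x) : ℤ) + (x:ℕ) - ((a⁻¹ x : Fin ℓ):ℕ) := by
  rcases hij.lt_or_gt with h | h
  · exact step_down' lam hanti a b i j h hb hlen hmb
  · rw [Equiv.swap_comm] at hb
    exact step_down' lam hanti a b j i h hb hlen hmb

theorem mu_nonneg_of_bruhat_le {ℓ : ℕ} (lam : Fin ℓ → ℕ)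
    (hanti : Antitone lam) (w u : Equiv.Perm (Fin ℓ))
    (hw : ∀ i : Fin ℓ, (0 : ℤ) ≤ (lam (w⁻¹ i) : ℤ) + (i : ℕ) - ((w⁻¹ i : Fin ℓ) : ℕ))
    (hle : bruhatLE u w) :
    ∀ i : Fin ℓ, (0 : ℤ) ≤ (lam (u⁻¹ i) : ℤ) + (i : ℕ) - ((u⁻¹ i : Fin ℓ) : ℕ) := by
  induction hle using Relation.ReflTransGen.head_induction_on with
  | refl => exact hw
  | head h _ ih =>
    obtain ⟨⟨i, j, hij, hb⟩, hlen⟩ := h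
    exact step_down lam hanti _ _ i j hij hb hlen ih
end

section
/- Let λ be a partition with ℓ parts and μ(w)_i = λ_{w^{-1}(i)} + i - w^{-1}(i) for w ∈ S_ℓ. The set W_λ = { w ∈ S_ℓ : all entries of μ(w) are nonnegative } is a lower ideal of the Bruhat order: if w ∈ W_λ and u ≤ w, then u ∈ W_λ. -/
/-- The set `W_λ` of permutations `w` all of whose shifted-action entries
`μ(w)_i = λ_{w⁻¹(i)} + i − w⁻¹(i)` are nonnegative. -/
def Wlam {ℓ : ℕ} (lam : Fin ℓ → ℕ) : Set (Equiv.Perm (Fin ℓ)) :=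
  {w | ∀ i : Fin ℓ, (0 : ℤ) ≤ (lam (w⁻¹ i) : ℤ) + (i : ℕ) - ((w⁻¹ i : Fin ℓ) : ℕ)}

lemma invCount_mul_swap_lt {m : ℕ} (σ : Equiv.Perm (Fin m)) (i j : Fin m)
    (hij : i < j) (hσ : σ j < σ i) :
    invCount (σ * Equiv.swap i j) < invCount σ := by
  classical
  set t := Equiv.swap i j with ht
  set A := Finset.univ.filter fun p : Fin m × Fin m => p.1 < p.2 ∧ σ p.2 < σ p.1 with hA
  set B := Finset.univ.filter
    (fun p : Fin m × Fin m => p.1 < p.2 ∧ (σ * t) p.2 < (σ * t) p.1) with hB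
  have hmem : (i, j) ∈ A := by simp [hA, hij, hσ]
  have hti : t i = j := Equiv.swap_apply_left i j
  have htj : t j = i := Equiv.swap_apply_right i j
  have hcard : B.card ≤ (A.erase (i, j)).card := by
    apply Finset.card_le_card_of_injOn (fun p => if t p.1 < t p.2 then (t p.1, t p.2) else p)
    · intro p hp
      have hp : p ∈ B := hp
      show _ ∈ A.erase (i, j)
      have hp' := (Finset.mem_filter.1 hp).2
      simp only [Equiv.Perm.mul_apply] at hp'
      obtain ⟨h1, h2⟩ := hp'
      by_cases hc : t p.1 < t p.2
      · simp only [if_pos hc]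
        refine Finset.mem_erase.2 ⟨?_, ?_⟩
        · intro he
          have e1 : t p.1 = i := congrArg Prod.fst he
          have e2 : t p.2 = j := congrArg Prod.snd he
          have : p.1 = j := by
            have := congrArg t e1; rwa [Equiv.swap_apply_self, hti] at this
          have h2' : p.2 = i := by
            have := congrArg t e2; rwa [Equiv.swap_apply_self, htj] at this
          rw [this, h2'] at h1
          exact absurd (h1.trans hij) (lt_irrefl j)
        · simp only [hA, Finset.mem_filter, Finset.mem_univ, true_and]
          exact ⟨hc, h2⟩
      · simp only [if_neg hc]
        have hne : t p.2 ≠ t p.1 := fun h => absurd (t.injective h) h1.ne'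
        have hgt : t p.2 < t p.1 := lt_of_le_of_ne (not_lt.1 hc) hne
        refine Finset.mem_erase.2 ⟨?_, ?_⟩
        all_goals {
          by_cases hx1 : p.1 = i
          · -- t p.1 = j
            by_cases hy2 : p.2 = j
            · exfalso
              rw [hx1, hy2, hti, htj] at h2
              exact absurd (h2.trans hσ) (lt_irrefl _)
            · have hy1 : p.2 ≠ i := fun h => h1.ne (hx1.trans h.symm)
              have hty : t p.2 = p.2 := Equiv.swap_apply_of_ne_of_ne hy1 hy2
              first
              | exact fun he => hy2 (congrArg Prod.snd he)
              | { simp only [hA, Finset.mem_filter, Finset.mem_univ, true_and]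
                  refine ⟨h1, ?_⟩
                  rw [hx1, hti, hty] at h2
                  rw [hx1]
                  exact h2.trans hσ }
          · by_cases hx2 : p.1 = j
            · exfalso
              have hy1 : p.2 ≠ i := fun h => absurd (h ▸ hx2 ▸ h1) (by simp [not_lt, le_of_lt hij])
              have hy2 : p.2 ≠ j := fun h => h1.ne (hx2.trans h.symm)
              have hty : t p.2 = p.2 := Equiv.swap_apply_of_ne_of_ne hy1 hy2
              rw [hx2, htj, hty] at hgt
              exact absurd ((hx2 ▸ h1).trans' hij |>.trans hgt) (lt_irrefl _)
            · have htx : t p.1 = p.1 := Equiv.swap_apply_of_ne_of_ne hx1 hx2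
              by_cases hy1 : p.2 = i
              · exfalso
                rw [htx, hy1, hti] at hgt
                exact absurd ((h1.trans (hy1 ▸ hij : p.2 < j)).trans hgt) (lt_irrefl _)
              · by_cases hy2 : p.2 = j
                · first
                  | exact fun he => hx1 (congrArg Prod.fst he)
                  | { simp only [hA, Finset.mem_filter, Finset.mem_univ, true_and]
                      refine ⟨h1, ?_⟩
                      rw [htx, hy2, htj] at h2
                      rw [hy2]
                      exact hσ.trans h2 }
                · exfalso
                  have hty : t p.2 = p.2 := Equiv.swap_apply_of_ne_of_ne hy1 hy2
                  rw [htx, hty] at hgt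
                  exact absurd (h1.trans hgt) (lt_irrefl _) }
    · intro p hp q hq heq
      simp only [hB, Finset.coe_filter, Set.mem_setOf_eq, Finset.mem_univ, true_and] at hp hq
      by_cases hcp : t p.1 < t p.2 <;> by_cases hcq : t q.1 < t q.2 <;>
        simp only [if_pos, if_neg, hcp, hcq, if_true, if_false] at heq
      · have e1 : t p.1 = t q.1 := congrArg Prod.fst heq
        have e2 : t p.2 = t q.2 := congrArg Prod.snd heq
        exact Prod.ext (t.injective e1) (t.injective e2)
      · exfalso
        apply hcq
        rw [← congrArg Prod.fst heq, ← congrArg Prod.snd heq]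
        simpa only [ht, Equiv.swap_apply_self] using hp.1
      · exfalso
        apply hcp
        rw [congrArg Prod.fst heq, congrArg Prod.snd heq]
        simpa only [ht, Equiv.swap_apply_self] using hq.1
      · exact heq
  have : B.card < A.card := hcard.trans_lt (Finset.card_erase_lt_of_mem hmem)
  simpa [invCount, hA, hB] using this

lemma step_mem {ℓ : ℕ} (lam : Fin ℓ → ℕ) (hanti : Antitone lam)
    (a b : Equiv.Perm (Fin ℓ)) (i j : Fin ℓ) (hij : i ≠ j)
    (hb : b = a * Equiv.swap i j) (hlt : invCount a < invCount b)
    (hbW : b ∈ Wlam lam) : a ∈ Wlam lam := by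
  wlog h : i < j generalizing i j
  · exact this j i hij.symm (by rwa [Equiv.swap_comm]) (hij.lt_or_gt.resolve_left h)
  have key : a i < a j := by
    rcases lt_trichotomy (a i) (a j) with h' | h' | h'
    · exact h'
    · exact absurd (a.injective h') hij
    · exfalso
      have := invCount_mul_swap_lt a i j h h'
      rw [← hb] at this
      omega
  have hbinv : ∀ k : Fin ℓ, b⁻¹ k = Equiv.swap i j (a⁻¹ k) := by
    intro k
    rw [hb, mul_inv_rev, Equiv.swap_inv, Equiv.Perm.mul_apply]
  intro k
  by_cases hc1 : a⁻¹ k = i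
  · have hbk : b⁻¹ k = j := by rw [hbinv, hc1, Equiv.swap_apply_left]
    have h1 := hbW k
    rw [hbk] at h1
    rw [hc1]
    have h2 : lam j ≤ lam i := hanti h.le
    have h3 : (i : ℕ) < (j : ℕ) := h
    omega
  · by_cases hc2 : a⁻¹ k = j
    · have hk : k = a j := by rw [← hc2, Equiv.Perm.inv_def, Equiv.apply_symm_apply]
      have hbk : b⁻¹ (a i) = j := by
        rw [hbinv, Equiv.Perm.inv_def, Equiv.symm_apply_apply, Equiv.swap_apply_left]
      have h1 := hbW (a i)
      rw [hbk] at h1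
      rw [hc2]
      have h3 : ((a i : Fin ℓ) : ℕ) < (k : ℕ) := by rw [hk]; exact key
      omega
    · have hbk : b⁻¹ k = a⁻¹ k := by
        rw [hbinv, Equiv.swap_apply_of_ne_of_ne hc1 hc2]
      have h1 := hbW k
      rwa [hbk] at h1

theorem Wlam_lower_ideal {ℓ : ℕ} (lam : Fin ℓ → ℕ) (hanti : Antitone lam) :
    ∀ w ∈ Wlam lam, ∀ u : Equiv.Perm (Fin ℓ), bruhatLE u w → u ∈ Wlam lam := by
  intro w hw u hu
  induction hu using Relation.ReflTransGen.head_induction_on with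
  | refl => exact hw
  | head hab _ ih =>
    obtain ⟨⟨i, j, hij, hb⟩, hlt⟩ := hab
    exact step_mem lam hanti _ _ i j hij hb hlt ih
end

section
/- Diagonal shifting preserves content: let μ be a tuple of rows (a 1-row multicomposition) where the first box of the i-th level has content κ_i with κ_i − κ_{i+1} = 1, and suppose applying s_i moves the last μ_i − μ_{i+1} + 1 boxes of level i diagonally southeast into level i+1 (assuming μ_i − μ_{i+1} + 1 ≥ 0 boxes exist). Then the multiset of contents of all boxes of the resulting multicomposition equals the multiset of contents of μ. -/
/-!
STATEMENT 12: Diagonal shifting preserves content.  For a 1-row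
multicomposition μ with ℓ levels, where the first box of level i has content
κ_i = δ − i + 1 (so κ_i − κ_{i+1} = 1), the move s_i replacing
(μ_i, μ_{i+1}) by (μ_{i+1} − 1, μ_i + 1) (moving the last μ_i − μ_{i+1} + 1
boxes of level i diagonally southeast into level i+1, assuming they exist)
preserves the multiset of contents of all boxes.

We use 0-indexed levels `i : Fin ℓ`, so the box (i, c) with 0 ≤ c < μ_i has
content δ − i + c (matching κ_i + c − 1 in the 1-indexed convention).
-/

/-- The multiset of contents of a 1-row multicomposition with charge δ. -/
def contentMultiset {ℓ : ℕ} (δ : ℤ) (μ : Fin ℓ → ℕ) : Multiset ℤ :=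
  ∑ i : Fin ℓ, (Multiset.range (μ i)).map fun c => δ - (i : ℕ) + (c : ℤ)

/-- Unfold the `ℕ → ℤ` coercion of `Multiset.range` under a map. -/
lemma coe_range_map (f : ℤ → ℤ) (m : ℕ) :
    (Multiset.range m : Multiset ℤ).map f =
      (Multiset.range m).map (fun c : ℕ => f (c : ℤ)) := by
  rw [show ((Multiset.range m : Multiset ℤ)) = (Multiset.range m).map (Nat.cast)
    from Multiset.bind_singleton _ _, Multiset.map_map]
  rfl

lemma aux_shift (a : ℤ) (m : ℕ) :
    (Multiset.range (m + 1)).map (fun c : ℕ => a - 1 + (c : ℤ)) =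
      (a - 1) ::ₘ (Multiset.range m).map (fun c : ℕ => a + (c : ℤ)) := by
  induction m with
  | zero => simp
  | succ n ih =>
      rw [Multiset.range_succ, Multiset.map_cons, ih, Multiset.range_succ,
        Multiset.map_cons, Multiset.cons_swap]
      congr 2
      push_cast
      ring

theorem diagonal_shift_preserves_content {ℓ : ℕ} (δ : ℤ) (μ : Fin ℓ → ℕ)
    (i j : Fin ℓ) (hij : (j : ℕ) = (i : ℕ) + 1)
    (hmove : 1 ≤ μ j)   -- the shifted level `i` must have μ_{i+1} − 1 ≥ 0 boxes
    (hbox : μ j ≤ μ i + 1)  -- there are μ_i − μ_{i+1} + 1 ≥ 0 boxes to move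
    :
    contentMultiset δ
        (fun t => if t = i then μ j - 1 else if t = j then μ i + 1 else μ t) =
      contentMultiset δ μ := by
  classical
  have hne : i ≠ j := by
    intro h; rw [h] at hij; omega
  have hj : j ∈ Finset.univ.erase i :=
    Finset.mem_erase.mpr ⟨hne.symm, Finset.mem_univ j⟩
  unfold contentMultiset
  have key : ∀ F G : Fin ℓ → Multiset ℤ,
      F i + F j = G i + G j → (∀ t, t ≠ i → t ≠ j → F t = G t) →
      ∑ t, F t = ∑ t, G t := by
    intro F G h1 h2
    rw [← Finset.add_sum_erase _ F (Finset.mem_univ i),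
        ← Finset.add_sum_erase _ F hj, ← add_assoc,
        ← Finset.add_sum_erase _ G (Finset.mem_univ i),
        ← Finset.add_sum_erase _ G hj, ← add_assoc, h1]
    congr 1
    refine Finset.sum_congr rfl fun t ht => ?_
    simp only [Finset.mem_erase] at ht
    exact h2 t ht.2.1 ht.1
  apply key
  · simp only [if_pos rfl, if_neg hne.symm, if_true, eq_self_iff_true, ite_true]
    have hδj : (δ - (j : ℕ) : ℤ) = (δ - (i : ℕ)) - 1 := by
      rw [hij]; push_cast; ring
    rw [hδj]
    simp only [coe_range_map]
    rw [aux_shift (δ - (i : ℕ)) (μ i)]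
    have hμj : μ j = (μ j - 1) + 1 := by omega
    conv_rhs => rw [hμj, aux_shift (δ - (i : ℕ)) (μ j - 1)]
    rw [← Multiset.singleton_add, ← Multiset.singleton_add]
    abel
  · intro t ht1 ht2
    simp [ht1, ht2]
end

section
/- Let λ be a partition. For the 1-row multipartition interpretation, suppose ν is a multipartition (with the fixed multicharge κ_i = δ − i + 1) such that some level ν^{(i)} has at least two rows, and μ is a multipartition in which every level has at most one row, with the same total multiset of contents. Then there is no content-preserving bijection f from the boxes of μ to the boxes of ν such that every box is either fixed or moved strictly to a higher level index (moved downward). -/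
/-!
STATEMENT 14: Let ν be a multipartition (multicharge κ_l = δ − l + 1) having a
level with at least two rows, and μ a multipartition every level of which has at
most one row.  Then there is no content-preserving bijection f from the boxes
of μ to the boxes of ν such that every box is either fixed or moved strictly to
a higher level index (moved downward).

A multipartition with ℓ levels is modeled as ν : Fin ℓ → ℕ → ℕ, where ν l r is
the length of the (0-indexed) row r of level l; boxes are triples (l, r, c)
with c < ν l r, and the box (l, r, c) has content (δ − l) + c − r (the
0-indexed form of κ_l + c − r).
-/

/-- Boxes of a multipartition. -/
def MBox {ℓ : ℕ} (ν : Fin ℓ → ℕ → ℕ) : Type :=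
  {b : Fin ℓ × ℕ × ℕ // b.2.2 < ν b.1 b.2.1}

/-- Content of a box. -/
def mcontent {ℓ : ℕ} (δ : ℤ) {ν : Fin ℓ → ℕ → ℕ} (b : MBox ν) : ℤ :=
  (δ - (b.1.1 : ℕ)) + (b.1.2.2 : ℤ) - (b.1.2.1 : ℕ)

theorem no_downward_content_bijection {ℓ : ℕ} (δ : ℤ) (μ ν : Fin ℓ → ℕ → ℕ)
    (hμpart : ∀ l, Antitone (μ l)) (hνpart : ∀ l, Antitone (ν l))
    (hμone : ∀ l r, 1 ≤ r → μ l r = 0)        -- μ is a 1-row multipartition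
    (hνmulti : ∃ l, 0 < ν l 1) :              -- ν has a level with ≥ 2 rows
    ¬ ∃ f : MBox μ ≃ MBox ν, ∀ b : MBox μ,
        mcontent δ (f b) = mcontent δ b ∧
        ((f b).val = b.val ∨ (b.val.1 : ℕ) < ((f b).val.1 : ℕ)) := by
  rintro ⟨f, hf⟩
  obtain ⟨l₀, hl₀⟩ := hνmulti
  set b₀ : MBox ν := ⟨(l₀, 1, 0), hl₀⟩ with hb₀
  set a : MBox μ := f.symm b₀ with ha
  have hfa : f a = b₀ := f.apply_symm_apply b₀
  obtain ⟨hc, hlev⟩ := hf a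
  rw [hfa] at hc hlev
  -- the row of a is 0
  have hrow : a.val.2.1 = 0 := by
    by_contra h
    have h1 : 1 ≤ a.val.2.1 := Nat.one_le_iff_ne_zero.mpr h
    have := a.property
    rw [hμone _ _ h1] at this
    exact Nat.not_lt_zero _ this
  rcases hlev with heq | hlt
  · -- a.val = b₀.val, so μ l₀ 1 > 0, contradiction
    have := a.property
    rw [← heq] at this
    simp only [hb₀] at this
    rw [hμone l₀ 1 le_rfl] at this
    exact Nat.not_lt_zero _ this
  · -- level strictly increases, but content forces column negative
    have hcont : (δ - (l₀ : ℕ)) + (0 : ℤ) - (1 : ℕ)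
        = (δ - (a.val.1 : ℕ)) + (a.val.2.2 : ℤ) - (a.val.2.1 : ℕ) := by
      simpa [mcontent, hb₀] using hc
    rw [hrow] at hcont
    have h1 : (a.val.2.2 : ℤ) = (a.val.1 : ℕ) - (l₀ : ℕ) - 1 := by
      push_cast at hcont ⊢; linarith
    have h2 : ((a.val.1 : ℕ) : ℤ) < ((l₀ : ℕ) : ℤ) := by exact_mod_cast hlt
    have h3 : (0 : ℤ) ≤ (a.val.2.2 : ℤ) := Int.natCast_nonneg _
    omega
end
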